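/- Let B be a commutative ring, π ∈ B, N ≥ 0, and 0 ≤ a ≤ N. Let C = B[T₀,…,T_N]/(T₀⋯T_a − π). Then the quotient C/(T_a) is isomorphic as a B-algebra to (B/(π))[T₀,…,T_{a-1},T_{a+1},…,T_N], the polynomial ring in the remaining N variables over B/(π). -/

import Mathlib

set_option synthInstance.maxHeartbeats 1000000
set_option maxHeartbeats 1000000

open MvPolynomial

/-- Let `C = B[T₀,…,T_N]/(T₀⋯T_a − π)`.  Then `C/(T_a)` is isomorphic as a
`B`-algebra to the polynomial ring in the remaining `N` variables over `B/(π)`. -/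
theorem stmt4 (B : Type*) [CommRing B] (π : B) (N a : ℕ) (ha : a ≤ N)
    (ta : Fin (N + 1)) (hta : (ta : ℕ) = a)
    (I : Ideal (MvPolynomial (Fin (N + 1)) B))
    (hI : I = Ideal.span
      {(∏ i ∈ Finset.univ.filter (fun i : Fin (N + 1) => (i : ℕ) ≤ a), X i) - C π}) :
    Nonempty
      (((MvPolynomial (Fin (N + 1)) B ⧸ I) ⧸
          Ideal.span {Ideal.Quotient.mk I (X ta)}) ≃ₐ[B]
        MvPolynomial (Fin N) (B ⧸ Ideal.span {π})) := by
  classical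
  set R := MvPolynomial (Fin (N + 1)) B with hR
  set P : R := ∏ i ∈ Finset.univ.filter (fun i : Fin (N + 1) => (i : ℕ) ≤ a), X i with hPdef
  have hmem : ta ∈ Finset.univ.filter (fun i : Fin (N + 1) => (i : ℕ) ≤ a) := by
    simp [hta]
  have hP : P = X ta * ∏ i ∈ (Finset.univ.filter
      (fun i : Fin (N + 1) => (i : ℕ) ≤ a)).erase ta, X i :=
    (Finset.mul_prod_erase _ _ hmem).symm
  have hXmem : (X ta : R) ∈ Ideal.span ({X ta} : Set R) := Ideal.subset_span rfl
  have hPmem : P ∈ Ideal.span ({X ta} : Set R) := by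
    rw [hP]; exact Ideal.mul_mem_right _ _ hXmem
  have hideal : I ⊔ Ideal.span {X ta}
      = Ideal.span ({X ta} : Set R) ⊔ Ideal.span ({C π} : Set R) := by
    rw [hI]
    apply le_antisymm
    · apply sup_le
      · rw [Ideal.span_le, Set.singleton_subset_iff]
        have hc : (C π : R) ∈ Ideal.span ({X ta} : Set R) ⊔ Ideal.span ({C π} : Set R) :=
          Ideal.mem_sup_right (Ideal.mem_span_singleton_self _)
        have hp : P ∈ Ideal.span ({X ta} : Set R) ⊔ Ideal.span ({C π} : Set R) :=
          Ideal.mem_sup_left hPmem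
        exact sub_mem hp hc
      · exact le_sup_left
    · apply sup_le
      · exact le_sup_right
      · rw [Ideal.span_le, Set.singleton_subset_iff]
        have hp2 : P ∈ Ideal.span ({P - C π} : Set R) ⊔ Ideal.span ({X ta} : Set R) :=
          Ideal.mem_sup_right hPmem
        have hi2 : P - C π ∈ Ideal.span ({P - C π} : Set R) ⊔ Ideal.span ({X ta} : Set R) :=
          Ideal.mem_sup_left (Ideal.mem_span_singleton_self _)
        simpa using sub_mem hp2 hi2
  -- the variable-killing equivalence
  let E : R ≃ₐ[B] Polynomial (MvPolynomial (Fin N) B) :=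
    (renameEquiv B (finSuccEquiv' ta)).trans (optionEquivLeft B (Fin N))
  have hEX : E (X ta) = Polynomial.X := by
    show optionEquivLeft B (Fin N) (renameEquiv B (finSuccEquiv' ta) (X ta)) = _
    rw [renameEquiv_apply, rename_X, finSuccEquiv'_at, optionEquivLeft_X_none]
  have hEC : ∀ b : B, E (C b) = Polynomial.C (C b) := by
    intro b
    show optionEquivLeft B (Fin N) (renameEquiv B (finSuccEquiv' ta) (C b)) = _
    rw [renameEquiv_apply, rename_C, optionEquivLeft_C]
  let q1 : (R ⧸ Ideal.span ({X ta} : Set R)) ≃ₐ[B]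
      Polynomial (MvPolynomial (Fin N) B) ⧸ Ideal.span ({Polynomial.X} : Set (Polynomial (MvPolynomial (Fin N) B))) :=
    Ideal.quotientEquivAlg _ _ E (by
      rw [Ideal.map_span, Set.image_singleton]
      congr 1
      rw [show ((E : R →+* Polynomial (MvPolynomial (Fin N) B)) (X ta)) = E (X ta) from rfl, hEX])
  have hXeq : (Ideal.span ({Polynomial.X} : Set (Polynomial (MvPolynomial (Fin N) B))))
      = Ideal.span {Polynomial.X - Polynomial.C 0} := by rw [map_zero, sub_zero]
  let q2 : (Polynomial (MvPolynomial (Fin N) B) ⧸ Ideal.span ({Polynomial.X} : Set (Polynomial (MvPolynomial (Fin N) B))))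
      ≃ₐ[B] MvPolynomial (Fin N) B :=
    (Ideal.quotientEquivAlgOfEq B hXeq).trans
      ((Polynomial.quotientSpanXSubCAlgEquiv (0 : MvPolynomial (Fin N) B)).restrictScalars B)
  let e3 : (R ⧸ Ideal.span ({X ta} : Set R)) ≃ₐ[B] MvPolynomial (Fin N) B := q1.trans q2
  have he3C : e3 (Ideal.Quotient.mk _ (C π)) = C π := by
    show (q1.trans q2) (Ideal.Quotient.mk _ (C π)) = C π
    rw [AlgEquiv.trans_apply]
    have h1 : q1 (Ideal.Quotient.mk _ (C π))
        = Ideal.Quotient.mk _ (Polynomial.C (C π)) := by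
      show Ideal.quotientEquivAlg _ _ E _ (Ideal.Quotient.mk _ (C π)) = _
      rw [Ideal.quotientEquivAlg_mk, hEC]
    rw [h1]
    show (((Ideal.quotientEquivAlgOfEq B hXeq).trans ((Polynomial.quotientSpanXSubCAlgEquiv (0 : MvPolynomial (Fin N) B)).restrictScalars B)) (Ideal.Quotient.mk _ (Polynomial.C (C π)))) = C π
    rw [AlgEquiv.trans_apply, Ideal.quotientEquivAlgOfEq_mk, AlgEquiv.restrictScalars_apply,
      Polynomial.quotientSpanXSubCAlgEquiv_mk, Polynomial.eval_C]
  -- chain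
  let A1 : ((R ⧸ I) ⧸ Ideal.span {Ideal.Quotient.mk I (X ta)}) ≃ₐ[B]
      R ⧸ (I ⊔ Ideal.span ({X ta} : Set R)) :=
    (Ideal.quotientEquivAlgOfEq B (show Ideal.span {Ideal.Quotient.mk I (X ta)}
        = (Ideal.span ({X ta} : Set R)).map (Ideal.Quotient.mkₐ B I) by
      rw [Ideal.map_span, Set.image_singleton]; rfl)).trans
      (DoubleQuot.quotQuotEquivQuotSupₐ B I (Ideal.span ({X ta} : Set R)))
  let A2 : (R ⧸ (I ⊔ Ideal.span ({X ta} : Set R))) ≃ₐ[B]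
      R ⧸ (Ideal.span ({X ta} : Set R) ⊔ Ideal.span ({C π} : Set R)) :=
    Ideal.quotientEquivAlgOfEq B hideal
  let A3 := (DoubleQuot.quotQuotEquivQuotSupₐ B (Ideal.span ({X ta} : Set R))
      (Ideal.span ({C π} : Set R))).symm
  let A4 : ((R ⧸ Ideal.span ({X ta} : Set R)) ⧸
        (Ideal.span ({C π} : Set R)).map (Ideal.Quotient.mkₐ B (Ideal.span ({X ta} : Set R))))
      ≃ₐ[B] (MvPolynomial (Fin N) B) ⧸
        (Ideal.map MvPolynomial.C (Ideal.span {π}) : Ideal (MvPolynomial (Fin N) B)) :=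
    Ideal.quotientEquivAlg _ _ e3 (by
      simp only [Ideal.map_span, Set.image_singleton, Ideal.Quotient.mkₐ_eq_mk]
      simp [he3C])
  let A5 := (MvPolynomial.quotientEquivQuotientMvPolynomial (σ := Fin N)
      (Ideal.span ({π} : Set B))).symm
  exact ⟨A1.trans (A2.trans (A3.trans (A4.trans A5)))⟩
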